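/- arXiv:1008.2104 — 2 statements merged into one kernel-verified Lean document; each statement's English description precedes it below -/
import Mathlib

section
/- Let (Ω, 𝓕, μ) be a probability space, let Y : Ω → ℝ be a nonnegative measurable function with Y ∈ L^q(μ) for every q ∈ [1, ∞), let c > 0, and let ν be the measure on Ω with density (1 + Y)/c with respect to μ; assume ν is a probability measure. Then for every measurable W : Ω → ℝ, the critical exponents coincide: the supremum (in the extended reals) of { v : ℝ | ∫ exp(v W²) dν < ∞ } equals the supremum of { v : ℝ | ∫ exp(v W²) dμ < ∞ }. -/
open MeasureTheory Real
open scoped ENNReal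

/-- Let `μ` be a probability measure, `Y ≥ 0` measurable with `Y ∈ L^q(μ)` for
every `q ∈ [1, ∞)`, `c > 0`, and let `ν` be the probability measure with
density `(1 + Y)/c` w.r.t. `μ`. Then for every measurable `W : Ω → ℝ`, the
critical exponents coincide: the supremum (in the extended reals) of
`{v | ∫ exp (v W²) dν < ∞}` equals that of `{v | ∫ exp (v W²) dμ < ∞}`. -/
theorem critical_moment_eq_of_density
    {Ω : Type*} [MeasurableSpace Ω] (μ : Measure Ω) [IsProbabilityMeasure μ]
    (Y : Ω → ℝ) (hY : Measurable Y) (hY0 : ∀ ω, 0 ≤ Y ω)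
    (hYq : ∀ q : ℝ, 1 ≤ q → MemLp Y (ENNReal.ofReal q) μ)
    (c : ℝ) (hc : 0 < c)
    (ν : Measure Ω)
    (hν : ν = μ.withDensity (fun ω => ENNReal.ofReal ((1 + Y ω) / c)))
    (hνprob : IsProbabilityMeasure ν)
    (W : Ω → ℝ) (hW : Measurable W) :
    sSup (Real.toEReal ''
        {v : ℝ | ∫⁻ ω, ENNReal.ofReal (Real.exp (v * (W ω) ^ 2)) ∂ν < ∞}) =
      sSup (Real.toEReal ''
        {v : ℝ | ∫⁻ ω, ENNReal.ofReal (Real.exp (v * (W ω) ^ 2)) ∂μ < ∞}) := by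
  set f : ℝ → Ω → ℝ≥0∞ := fun v ω => ENNReal.ofReal (Real.exp (v * (W ω) ^ 2)) with hf
  have hfm : ∀ v, Measurable (f v) := fun v =>
    (((hW.pow_const 2).const_mul v).exp).ennreal_ofReal
  have hdm : Measurable (fun ω => ENNReal.ofReal ((1 + Y ω) / c)) :=
    ((measurable_const.add hY).div_const c).ennreal_ofReal
  have hlν : ∀ v, ∫⁻ ω, f v ω ∂ν
      = ∫⁻ ω, ENNReal.ofReal ((1 + Y ω) / c) * f v ω ∂μ := by
    intro v
    rw [hν, lintegral_withDensity_eq_lintegral_mul μ hdm (hfm v)]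
    rfl
  -- Step 1: S_ν ⊆ S_μ
  have step1 : ∀ v : ℝ, ∫⁻ ω, f v ω ∂ν < ∞ → ∫⁻ ω, f v ω ∂μ < ∞ := by
    intro v hv
    have hpt : ∀ ω, f v ω ≤ ENNReal.ofReal c *
        (ENNReal.ofReal ((1 + Y ω) / c) * f v ω) := by
      intro ω
      rw [← mul_assoc, ← ENNReal.ofReal_mul hc.le, mul_div_cancel₀ _ hc.ne']
      calc f v ω = 1 * f v ω := (one_mul _).symm
        _ ≤ ENNReal.ofReal (1 + Y ω) * f v ω := by
            gcongr
            rw [← ENNReal.ofReal_one]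
            exact ENNReal.ofReal_le_ofReal (by linarith [hY0 ω])
    calc ∫⁻ ω, f v ω ∂μ
        ≤ ∫⁻ ω, ENNReal.ofReal c * (ENNReal.ofReal ((1 + Y ω) / c) * f v ω) ∂μ :=
          lintegral_mono hpt
      _ = ENNReal.ofReal c * ∫⁻ ω, ENNReal.ofReal ((1 + Y ω) / c) * f v ω ∂μ :=
          lintegral_const_mul _ (hdm.mul (hfm v))
      _ = ENNReal.ofReal c * ∫⁻ ω, f v ω ∂ν := by rw [hlν v]
      _ < ∞ := ENNReal.mul_lt_top ENNReal.ofReal_lt_top hv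
  -- negative exponents are always fine
  have hneg : ∀ v : ℝ, v ≤ 0 → ∫⁻ ω, f v ω ∂ν < ∞ := by
    intro v hv
    calc ∫⁻ ω, f v ω ∂ν ≤ ∫⁻ _, 1 ∂ν := by
          refine lintegral_mono fun ω => ?_
          rw [← ENNReal.ofReal_one]
          exact ENNReal.ofReal_le_ofReal
            (Real.exp_le_one_iff.2 (mul_nonpos_of_nonpos_of_nonneg hv (sq_nonneg _)))
      _ = 1 := by simp
      _ < ∞ := ENNReal.one_lt_top
  -- Step 2: Hölder
  have key : ∀ v w : ℝ, 0 < w → w < v → ∫⁻ ω, f v ω ∂μ < ∞ → ∫⁻ ω, f w ω ∂ν < ∞ := by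
    intro v w hw0 hwv hvfin
    set p : ℝ := v / w with hp
    have hp1 : 1 < p := (one_lt_div hw0).2 hwv
    set q : ℝ := p / (p - 1) with hq
    have hpq : p.HolderConjugate q := Real.HolderConjugate.conjExponent hp1
    have hq1 : 1 ≤ q := hpq.symm.lt.le
    -- ∫ f w ^ p = ∫ f v
    have hfwp : ∀ ω, f w ω ^ p = f v ω := by
      intro ω
      show ENNReal.ofReal (Real.exp (w * W ω ^ 2)) ^ p
        = ENNReal.ofReal (Real.exp (v * W ω ^ 2))
      rw [ENNReal.ofReal_rpow_of_nonneg (Real.exp_nonneg _) hpq.nonneg,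
        ← Real.exp_mul]
      congr 2
      rw [hp]
      have hwne : w ≠ 0 := hw0.ne'
      field_simp
    -- ∫ (ofReal Y) ^ q < ∞
    have hYfin : ∫⁻ ω, ENNReal.ofReal (Y ω) ^ q ∂μ < ∞ := by
      have h := (hYq q hq1).eLpNorm_lt_top
      have h2 := lintegral_rpow_enorm_lt_top_of_eLpNorm_lt_top
        (p := ENNReal.ofReal q) (by simp [hq1]; linarith) ENNReal.ofReal_ne_top h
      rw [ENNReal.toReal_ofReal (by linarith)] at h2
      refine lt_of_eq_of_lt ?_ h2
      refine lintegral_congr fun ω => ?_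
      rw [Real.enorm_eq_ofReal (hY0 ω)]
    have hfwfin : ∫⁻ ω, f w ω ∂μ < ∞ := by
      refine lt_of_le_of_lt (lintegral_mono fun ω => ?_) hvfin
      exact ENNReal.ofReal_le_ofReal (Real.exp_le_exp.2
        (mul_le_mul_of_nonneg_right hwv.le (sq_nonneg _)))
    -- Hölder bound on ∫ ofReal Y * f w
    have hYfw : ∫⁻ ω, ENNReal.ofReal (Y ω) * f w ω ∂μ < ∞ := by
      have hH := ENNReal.lintegral_mul_le_Lp_mul_Lq μ hpq (hfm w).aemeasurable
        (hY.ennreal_ofReal).aemeasurable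
      simp only [Pi.mul_apply] at hH
      have hH2 : ∫⁻ ω, ENNReal.ofReal (Y ω) * f w ω ∂μ ≤
          (∫⁻ ω, f w ω ^ p ∂μ) ^ (1 / p) * (∫⁻ ω, ENNReal.ofReal (Y ω) ^ q ∂μ) ^ (1 / q) := by
        refine le_trans (le_of_eq ?_) hH
        exact lintegral_congr fun ω => mul_comm _ _
      refine lt_of_le_of_lt hH2 (ENNReal.mul_lt_top ?_ ?_)
      · refine ENNReal.rpow_lt_top_of_nonneg (by positivity) ?_
        rw [lintegral_congr hfwp]; exact hvfin.ne
      · exact ENNReal.rpow_lt_top_of_nonneg (by positivity) hYfin.ne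
    -- assemble
    rw [hlν w]
    have hpt : ∀ ω, ENNReal.ofReal ((1 + Y ω) / c) * f w ω =
        ENNReal.ofReal (1 / c) * (f w ω + ENNReal.ofReal (Y ω) * f w ω) := by
      intro ω
      rw [div_eq_mul_inv, mul_comm (1 + Y ω), ENNReal.ofReal_mul (by positivity),
        one_div, ENNReal.ofReal_add zero_le_one (hY0 ω), ENNReal.ofReal_one,
        mul_assoc, add_mul, one_mul]
    rw [lintegral_congr hpt,
      lintegral_const_mul (f := fun ω => f w ω + ENNReal.ofReal (Y ω) * f w ω) _ ((hfm w).add (hY.ennreal_ofReal.mul (hfm w))),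
      lintegral_add_left (hfm w)]
    have hsum : (∫⁻ ω, f w ω ∂μ) + ∫⁻ ω, ENNReal.ofReal (Y ω) * f w ω ∂μ < ∞ :=
      ENNReal.add_lt_top.mpr ⟨hfwfin, hYfw⟩
    exact ENNReal.mul_lt_top ENNReal.ofReal_lt_top hsum
  -- conclude
  apply le_antisymm
  · refine sSup_le ?_
    rintro x ⟨v, hv, rfl⟩
    exact le_sSup ⟨v, step1 v hv, rfl⟩
  · refine sSup_le ?_
    rintro x ⟨v, hv, rfl⟩
    by_contra h
    push_neg at h
    obtain ⟨w, hw1, hw2⟩ := EReal.exists_between_coe_real h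
    have h0 : (0 : EReal) ≤ sSup (Real.toEReal ''
        {v : ℝ | ∫⁻ ω, ENNReal.ofReal (Real.exp (v * (W ω) ^ 2)) ∂ν < ∞}) :=
      le_sSup ⟨0, hneg 0 le_rfl, rfl⟩
    have hw0 : (0 : ℝ) < w := by exact_mod_cast lt_of_le_of_lt h0 hw1
    have hwv : w < v := by exact_mod_cast hw2
    have hle : (w : EReal) ≤ sSup (Real.toEReal ''
        {v : ℝ | ∫⁻ ω, ENNReal.ofReal (Real.exp (v * (W ω) ^ 2)) ∂ν < ∞}) :=
      le_sSup ⟨w, key v w hw0 hwv hv, rfl⟩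
    exact absurd hle (not_le.2 hw1)
end

section
/- Abstract form of the main theorem. Let (Ω, 𝓕) be a measurable space and let m ≥ 1. Let Q₀, Q₁, …, Q_m be probability measures on Ω, let X₁, …, X_m : Ω → ℝ be nonnegative measurable functions, and let c₁, …, c_m > 0 be constants such that for each k ∈ {1,…,m}: (i) Q_{k−1} has density (1 + X_k)/c_k with respect to Q_k; and (ii) X_k ∈ L^q(Q_k) for every q ∈ [1, ∞). Let F : Ω → ℝ be a measurable function with F > 0 such that the law of log F under Q₀ is Gaussian N(μ, s) for some μ ∈ ℝ and s > 0. Then the supremum of the set { v : ℝ | ∫ exp(v (log F)²) dQ_m < ∞ } equals 1/(2s). -/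
open MeasureTheory ProbabilityTheory Real
open scoped ENNReal NNReal


private lemma aux_integrable_exp_quadratic {b l e : ℝ} (hb : 0 < b) :
    Integrable (fun x : ℝ => Real.exp (-b * x ^ 2 + l * x + e)) := by
  have h1 : Integrable (fun x : ℝ => Real.exp (-b * (x - l / (2 * b)) ^ 2)) :=
    (integrable_exp_neg_mul_sq hb).comp_sub_right (l / (2 * b))
  have h2 := h1.const_mul (Real.exp (e + l ^ 2 / (4 * b)))
  refine h2.congr (Filter.Eventually.of_forall fun x => ?_)
  dsimp only
  rw [← Real.exp_add]
  congr 1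
  field_simp
  ring

private lemma aux_pdf_mul (μ : ℝ) (s : ℝ≥0) (v x : ℝ) :
    gaussianPDFReal μ s x * Real.exp (v * x ^ 2)
      = (Real.sqrt (2 * π * s))⁻¹ *
        Real.exp (-(x - μ) ^ 2 / (2 * s) + v * x ^ 2) := by
  rw [gaussianPDFReal, mul_assoc, ← Real.exp_add]

private lemma aux_gauss_lt (μ : ℝ) (s : ℝ≥0) (hs : 0 < s) {v : ℝ}
    (hv : v < 1 / (2 * (s : ℝ))) :
    ∫⁻ x, ENNReal.ofReal (Real.exp (v * x ^ 2)) ∂(gaussianReal μ s) < ∞ := by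
  have hs' : (0 : ℝ) < s := hs
  rw [gaussianReal_of_var_ne_zero _ hs.ne',
    lintegral_withDensity_eq_lintegral_mul _ (measurable_gaussianPDF μ s)
      (by measurability)]
  have heq : ∀ x : ℝ,
      (gaussianPDF μ s * fun x => ENNReal.ofReal (Real.exp (v * x ^ 2))) x
        = ENNReal.ofReal (gaussianPDFReal μ s x * Real.exp (v * x ^ 2)) := by
    intro x
    simp [gaussianPDF, ENNReal.ofReal_mul (gaussianPDFReal_nonneg μ s x)]
  simp only [heq]
  refine Integrable.lintegral_lt_top ?_
  have hb : 0 < 1 / (2 * (s : ℝ)) - v := by linarith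
  have h2 := (aux_integrable_exp_quadratic (l := μ / s) (e := -(μ ^ 2) / (2 * s))
    hb).const_mul ((Real.sqrt (2 * π * s))⁻¹)
  refine h2.congr (Filter.Eventually.of_forall fun x => ?_)
  dsimp only
  rw [aux_pdf_mul]
  congr 1
  field_simp
  ring

private lemma aux_gauss_top (μ : ℝ) (s : ℝ≥0) (hs : 0 < s) {v : ℝ}
    (hv : 1 / (2 * (s : ℝ)) < v) :
    ∫⁻ x, ENNReal.ofReal (Real.exp (v * x ^ 2)) ∂(gaussianReal μ s) = ∞ := by
  have hs' : (0 : ℝ) < s := hs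
  set b : ℝ := v - 1 / (2 * (s : ℝ)) with hbdef
  have hb : 0 < b := sub_pos.mpr hv
  set l : ℝ := μ / s with hldef
  set e : ℝ := -(μ ^ 2) / (2 * s) with hedef
  set C : ℝ := (Real.sqrt (2 * π * s))⁻¹ * Real.exp (e - l ^ 2 / (4 * b)) with hCdef
  have hC : 0 < C := by positivity
  have hlow : ∀ x : ℝ, C ≤ gaussianPDFReal μ s x * Real.exp (v * x ^ 2) := by
    intro x
    rw [aux_pdf_mul, hCdef]
    have hsqrt : (0 : ℝ) < (Real.sqrt (2 * π * s))⁻¹ := by positivity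
    refine mul_le_mul_of_nonneg_left ?_ hsqrt.le
    refine Real.exp_le_exp.mpr ?_
    have key : -(x - μ) ^ 2 / (2 * s) + v * x ^ 2 = b * x ^ 2 + l * x + e := by
      rw [hbdef, hldef, hedef]; field_simp; ring
    rw [key]
    have h1 : b * x ^ 2 + l * x + l ^ 2 / (4 * b) = (2 * b * x + l) ^ 2 / (4 * b) := by
      field_simp; ring
    have h2 : (0:ℝ) ≤ (2 * b * x + l) ^ 2 / (4 * b) :=
      div_nonneg (sq_nonneg _) (by linarith)
    linarith
  rw [gaussianReal_of_var_ne_zero _ hs.ne',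
    lintegral_withDensity_eq_lintegral_mul _ (measurable_gaussianPDF μ s)
      (by measurability)]
  have heq : ∀ x : ℝ,
      (gaussianPDF μ s * fun x => ENNReal.ofReal (Real.exp (v * x ^ 2))) x
        = ENNReal.ofReal (gaussianPDFReal μ s x * Real.exp (v * x ^ 2)) := by
    intro x
    simp [gaussianPDF, ENNReal.ofReal_mul (gaussianPDFReal_nonneg μ s x)]
  simp only [heq]
  refine top_le_iff.mp ?_
  calc (⊤ : ℝ≥0∞) = ENNReal.ofReal C * volume (Set.univ : Set ℝ) := by
        rw [Real.volume_univ, ENNReal.mul_top (by simp [ENNReal.ofReal_eq_zero]; linarith)]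
    _ = ∫⁻ _, ENNReal.ofReal C ∂(volume : Measure ℝ) := by rw [lintegral_const]
    _ ≤ _ := lintegral_mono fun x => ENNReal.ofReal_le_ofReal (hlow x)

set_option maxHeartbeats 1000000 in
/-- Abstract form of the main theorem of the paper. Let `Q 0, Q 1, …, Q m`
(`m ≥ 1`) be probability measures such that for each `k`, `Q k` has density
`(1 + X k)/c k` with respect to `Q (k+1)`, where `X k ≥ 0` is in `L^q(Q (k+1))`
for every `q ∈ [1, ∞)` and `c k > 0`. If `F > 0` is measurable and the law of
`log F` under `Q 0` is Gaussian `N(μ, s)` with `s > 0`, then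
`sup {v | ∫ exp (v (log F)²) d(Q m) < ∞} = 1/(2s)`. -/
theorem critical_moment_libor
    {Ω : Type*} [MeasurableSpace Ω] (m : ℕ) (hm : 1 ≤ m)
    (Q : Fin (m + 1) → Measure Ω) (hQ : ∀ k, IsProbabilityMeasure (Q k))
    (X : Fin m → Ω → ℝ) (hX : ∀ k, Measurable (X k))
    (hX0 : ∀ k, ∀ ω, 0 ≤ X k ω)
    (c : Fin m → ℝ) (hc : ∀ k, 0 < c k)
    (hdens : ∀ k : Fin m,
      Q k.castSucc =
        (Q k.succ).withDensity (fun ω => ENNReal.ofReal ((1 + X k ω) / c k)))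
    (hXq : ∀ k : Fin m, ∀ q : ℝ, 1 ≤ q →
      MemLp (X k) (ENNReal.ofReal q) (Q k.succ))
    (F : Ω → ℝ) (hF : Measurable F) (hFpos : ∀ ω, 0 < F ω)
    (μ : ℝ) (s : ℝ≥0) (hs : 0 < s)
    (hlaw : (Q 0).map (fun ω => Real.log (F ω)) = gaussianReal μ s) :
    sSup {v : ℝ |
        ∫⁻ ω, ENNReal.ofReal (Real.exp (v * (Real.log (F ω)) ^ 2))
          ∂(Q (Fin.last m)) < ∞} =
      1 / (2 * (s : ℝ)) := by
  have hsR : (0 : ℝ) < s := hs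
  set a : ℝ := 1 / (2 * (s : ℝ)) with hadef
  have ha : 0 < a := by positivity
  set d : Fin m → Ω → ℝ≥0∞ := fun k ω => ENNReal.ofReal ((1 + X k ω) / c k)
    with hddef
  have hdmeas : ∀ k, Measurable (d k) := fun k =>
    ((measurable_const.add (hX k)).div_const (c k)).ennreal_ofReal
  have hdlow : ∀ k ω, ENNReal.ofReal (1 / c k) ≤ d k ω := fun k ω =>
    ENNReal.ofReal_le_ofReal ((div_le_div_iff_of_pos_right (hc k)).mpr (by linarith [hX0 k ω]))
  -- transfer of finiteness through a lower-bounded density factor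
  have hfin_of : ∀ (ν : Measure Ω) (f : Ω → ℝ≥0∞) (ε : ℝ), 0 < ε →
      (∀ ω, ENNReal.ofReal ε ≤ f ω) → ∀ g : Ω → ℝ≥0∞, Measurable g →
      (∫⁻ ω, f ω * g ω ∂ν < ∞) → ∫⁻ ω, g ω ∂ν < ∞ := by
    intro ν f ε hε hle g hg hfin
    have h1 : ENNReal.ofReal ε * ∫⁻ ω, g ω ∂ν ≤ ∫⁻ ω, f ω * g ω ∂ν := by
      rw [← lintegral_const_mul _ hg]
      exact lintegral_mono fun ω => mul_le_mul_left (hle ω) _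
    by_contra h
    rw [not_lt, top_le_iff] at h
    rw [h, ENNReal.mul_top (by simp [ENNReal.ofReal_eq_zero]; linarith)] at h1
    exact absurd (lt_of_le_of_lt h1 hfin) (lt_irrefl ⊤)
  -- the density chain
  have chain : ∀ n : ℕ, ∀ hn : n ≤ m, ∃ D : Ω → ℝ≥0∞, Measurable D ∧
      (∃ ε : ℝ, 0 < ε ∧ ∀ ω, ENNReal.ofReal ε ≤ D ω) ∧
      (∀ q : ℝ, 1 ≤ q → ∫⁻ ω, D ω ^ q ∂(Q ⟨n, Nat.lt_succ_of_le hn⟩) < ∞) ∧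
      Q 0 = (Q ⟨n, Nat.lt_succ_of_le hn⟩).withDensity D := by
    intro n
    induction n with
    | zero =>
      intro hn
      have h0 : (⟨0, Nat.lt_succ_of_le hn⟩ : Fin (m + 1)) = 0 := Fin.mk_zero
      refine ⟨fun _ => 1, measurable_const, ⟨1, one_pos, fun ω => by simp⟩, ?_, ?_⟩
      · intro q hq
        haveI := hQ ⟨0, Nat.lt_succ_of_le hn⟩
        simp [ENNReal.one_rpow]
      · rw [h0]; exact (withDensity_one (μ := Q 0)).symm
    | succ n ih =>
      intro hn
      have hn' : n < m := hn
      have hnm : n ≤ m := le_of_lt hn'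
      obtain ⟨D, hDmeas, ⟨ε, hε, hεle⟩, hDq, hDchain⟩ := ih hnm
      set k : Fin m := ⟨n, hn'⟩ with hkdef
      haveI := hQ k.succ
      have hcast : (k.castSucc : Fin (m + 1)) = ⟨n, Nat.lt_succ_of_le hnm⟩ := rfl
      have hsucc : (k.succ : Fin (m + 1)) = ⟨n + 1, Nat.lt_succ_of_le hn⟩ := rfl
      have hQn : Q ⟨n, Nat.lt_succ_of_le hnm⟩
          = (Q k.succ).withDensity (d k) := by
        rw [← hcast]; exact hdens k
      refine ⟨fun ω => d k ω * D ω, (hdmeas k).mul hDmeas,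
        ⟨1 / c k * ε, mul_pos (one_div_pos.mpr (hc k)) hε, fun ω => ?_⟩, ?_, ?_⟩
      · calc ENNReal.ofReal (1 / c k * ε)
            = ENNReal.ofReal (1 / c k) * ENNReal.ofReal ε := by
              rw [ENNReal.ofReal_mul (one_div_pos.mpr (hc k)).le]
          _ ≤ d k ω * D ω := mul_le_mul' (hdlow k ω) (hεle ω)
      · intro q hq
        have hq0 : (0 : ℝ) ≤ q := by linarith
        have h2q : (1 : ℝ) ≤ 2 * q := by linarith
        have hd2q : ∫⁻ ω, d k ω ^ (2 * q) ∂(Q k.succ) < ∞ := by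
          have h1 : MemLp (fun ω => 1 + X k ω) (ENNReal.ofReal (2 * q)) (Q k.succ) :=
            (memLp_const (1:ℝ)).add (hXq k (2 * q) h2q)
          have hmem : MemLp (fun ω => (1 + X k ω) / c k)
              (ENNReal.ofReal (2 * q)) (Q k.succ) := by
            have h2 := h1.const_mul (c k)⁻¹
            simpa [div_eq_inv_mul] using h2
          have hne0 : ENNReal.ofReal (2 * q) ≠ 0 := by
            simp only [ne_eq, ENNReal.ofReal_eq_zero, not_le]; linarith
          have hint := hmem.integrable_norm_rpow hne0 ENNReal.ofReal_ne_top
          rw [ENNReal.toReal_ofReal (by linarith)] at hint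
          have hlt := hint.lintegral_lt_top
          refine lt_of_eq_of_lt ?_ hlt
          refine lintegral_congr fun ω => ?_
          have hpos : (0 : ℝ) ≤ (1 + X k ω) / c k :=
            div_nonneg (by linarith [hX0 k ω]) (hc k).le
          rw [hddef]
          dsimp only
          rw [Real.norm_of_nonneg hpos,
            ENNReal.ofReal_rpow_of_nonneg hpos (by linarith)]
        have hD2q : ∫⁻ ω, D ω ^ (2 * q) ∂(Q k.succ) < ∞ := by
          have hfin : ∫⁻ ω, d k ω * D ω ^ (2 * q) ∂(Q k.succ) < ∞ := by
            have hrw := lintegral_withDensity_eq_lintegral_mul (Q k.succ)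
              (hdmeas k) (hDmeas.pow_const (2 * q))
            have : ∫⁻ ω, d k ω * D ω ^ (2 * q) ∂(Q k.succ)
                = ∫⁻ ω, D ω ^ (2 * q) ∂(Q ⟨n, Nat.lt_succ_of_le hnm⟩) := by
              rw [hQn, hrw]; rfl
            rw [this]
            exact hDq (2 * q) h2q
          exact hfin_of (Q k.succ) (d k) (1 / c k) (one_div_pos.mpr (hc k)) (hdlow k)
            (fun ω => D ω ^ (2 * q)) (hDmeas.pow_const (2 * q)) hfin
        have hconj : Real.HolderConjugate 2 2 := Real.holderConjugate_iff.mpr ⟨one_lt_two, by norm_num⟩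
        have hH := ENNReal.lintegral_mul_le_Lp_mul_Lq (Q k.succ) hconj
          ((hdmeas k).pow_const q).aemeasurable (hDmeas.pow_const q).aemeasurable
        have he1 : (∫⁻ ω, (d k ω ^ q) ^ (2 : ℝ) ∂(Q k.succ))
            = ∫⁻ ω, d k ω ^ (2 * q) ∂(Q k.succ) := by
          refine lintegral_congr fun ω => ?_
          rw [← ENNReal.rpow_mul]; ring_nf
        have he2 : (∫⁻ ω, (D ω ^ q) ^ (2 : ℝ) ∂(Q k.succ))
            = ∫⁻ ω, D ω ^ (2 * q) ∂(Q k.succ) := by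
          refine lintegral_congr fun ω => ?_
          rw [← ENNReal.rpow_mul]; ring_nf
        calc ∫⁻ ω, (d k ω * D ω) ^ q ∂(Q k.succ)
            = ∫⁻ ω, d k ω ^ q * D ω ^ q ∂(Q k.succ) :=
              lintegral_congr fun ω => ENNReal.mul_rpow_of_nonneg _ _ hq0
          _ ≤ (∫⁻ ω, (d k ω ^ q) ^ (2 : ℝ) ∂(Q k.succ)) ^ (1 / (2 : ℝ)) *
              (∫⁻ ω, (D ω ^ q) ^ (2 : ℝ) ∂(Q k.succ)) ^ (1 / (2 : ℝ)) := hH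
          _ < ∞ := by
              rw [he1, he2]
              exact ENNReal.mul_lt_top
                (ENNReal.rpow_lt_top_of_nonneg (by norm_num) hd2q.ne)
                (ENNReal.rpow_lt_top_of_nonneg (by norm_num) hD2q.ne)
      · rw [hDchain, hQn, ← withDensity_mul _ (hdmeas k) hDmeas]
        rfl
  -- apply the chain at n = m
  obtain ⟨D, hDmeas, ⟨ε, hε, hεle⟩, hDq, hDchain⟩ := chain m le_rfl
  have hlast : (⟨m, Nat.lt_succ_of_le le_rfl⟩ : Fin (m + 1)) = Fin.last m := rfl
  rw [hlast] at hDq hDchain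
  -- the integrand
  set G : ℝ → Ω → ℝ≥0∞ :=
    fun v ω => ENNReal.ofReal (Real.exp (v * Real.log (F ω) ^ 2)) with hGdef
  have hGmeas : ∀ v, Measurable (G v) := fun v =>
    (((hF.log.pow_const 2).const_mul v).exp).ennreal_ofReal
  have hQ0 : ∀ v : ℝ, ∫⁻ ω, G v ω ∂(Q 0)
      = ∫⁻ x, ENNReal.ofReal (Real.exp (v * x ^ 2)) ∂(gaussianReal μ s) := by
    intro v
    rw [← hlaw, lintegral_map (by measurability) hF.log]
  have htrans : ∀ v : ℝ, ∫⁻ ω, D ω * G v ω ∂(Q (Fin.last m))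
      = ∫⁻ ω, G v ω ∂(Q 0) := by
    intro v
    rw [hDchain, lintegral_withDensity_eq_lintegral_mul _ hDmeas (hGmeas v)]
    rfl
  have claim1 : ∀ v : ℝ, v < a → ∫⁻ ω, G v ω ∂(Q (Fin.last m)) < ∞ := by
    intro v hv
    refine hfin_of (Q (Fin.last m)) D ε hε hεle (G v) (hGmeas v) ?_
    rw [htrans, hQ0]
    exact aux_gauss_lt μ s hs hv
  have claim2 : ∀ v : ℝ, (∫⁻ ω, G v ω ∂(Q (Fin.last m)) < ∞) → v ≤ a := by
    intro v hvS
    by_contra h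
    push_neg at h
    obtain ⟨w, haw, hwv⟩ : ∃ w : ℝ, a < w ∧ w < v :=
      ⟨(a + v) / 2, by linarith, by linarith⟩
    have hw0 : (0 : ℝ) < w := lt_trans ha haw
    obtain ⟨p, hp, hpw⟩ : ∃ p : ℝ, 1 < p ∧ w * p = v :=
      ⟨v / w, (one_lt_div hw0).mpr hwv, by field_simp⟩
    obtain ⟨qe, hconj⟩ : ∃ qe : ℝ, p.HolderConjugate qe :=
      ⟨p / (p - 1), Real.HolderConjugate.conjExponent hp⟩
    have hqe1 : 1 ≤ qe := le_of_lt hconj.symm.lt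
    have hfin0 : ∫⁻ ω, G w ω ∂(Q 0) < ∞ := by
      have hH := ENNReal.lintegral_mul_le_Lp_mul_Lq (Q (Fin.last m)) hconj
        (hGmeas w).aemeasurable hDmeas.aemeasurable
      have he1 : (∫⁻ ω, G w ω ^ p ∂(Q (Fin.last m)))
          = ∫⁻ ω, G v ω ∂(Q (Fin.last m)) := by
        refine lintegral_congr fun ω => ?_
        rw [hGdef]
        dsimp only
        rw [ENNReal.ofReal_rpow_of_nonneg (Real.exp_nonneg _)
          (by linarith : (0:ℝ) ≤ p), ← Real.exp_mul]
        have hwp : w * Real.log (F ω) ^ 2 * p = v * Real.log (F ω) ^ 2 := by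
          linear_combination Real.log (F ω) ^ 2 * hpw
        rw [hwp]
      have hcomm : ∫⁻ ω, G w ω ∂(Q 0)
          = ∫⁻ ω, G w ω * D ω ∂(Q (Fin.last m)) := by
        rw [← htrans w]
        exact lintegral_congr fun ω => mul_comm _ _
      rw [hcomm]
      refine lt_of_le_of_lt hH ?_
      rw [he1]
      exact ENNReal.mul_lt_top
        (ENNReal.rpow_lt_top_of_nonneg (one_div_nonneg.mpr (by linarith)) hvS.ne)
        (ENNReal.rpow_lt_top_of_nonneg (one_div_nonneg.mpr (by linarith)) (hDq qe hqe1).ne)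
    rw [hQ0, aux_gauss_top μ s hs haw] at hfin0
    exact absurd hfin0 (lt_irrefl ⊤)
  show sSup {v : ℝ | ∫⁻ ω, G v ω ∂(Q (Fin.last m)) < ∞} = a
  have hSne : Set.Nonempty {v : ℝ | ∫⁻ ω, G v ω ∂(Q (Fin.last m)) < ∞} :=
    ⟨a - 1, claim1 _ (by linarith)⟩
  refine le_antisymm (csSup_le hSne fun v hv => claim2 v hv) ?_
  have hIio : a = sSup (Set.Iio a) := csSup_Iio.symm
  rw [hIio]
  refine csSup_le_csSup ⟨a, fun v hv => claim2 v hv⟩ ⟨a - 1, by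
    simp only [Set.mem_Iio]; linarith⟩ fun v hv => claim1 v hv
end
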